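/- Assume the continuum hypothesis 2^ℵ₀ = ℵ₁ and that K satisfies hypotheses (H). Then any two K-ℵ₁-saturated L-structures of cardinality ℵ₁ are isomorphic. -/

import Mathlib

open FirstOrder FirstOrder.Language CategoryTheory Cardinal Set

namespace FraisseFreeAmalg

variable (L : FirstOrder.Language.{0, 0})

/-- The class is closed under isomorphism. -/
def IsoClosed (K : Set (Bundled.{0} L.Structure)) : Prop :=
  ∀ A ∈ K, ∀ B : Bundled.{0} L.Structure, Nonempty (A ≃[L] B) → B ∈ K

/-- All members of the class are finite or countably infinite. -/
def SmallMembers (K : Set (Bundled.{0} L.Structure)) : Prop :=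
  ∀ A ∈ K, Countable A

/-- Condition (1) of (H): universal axiomatizability. -/
def UnivAx (K : Set (Bundled.{0} L.Structure)) : Prop :=
  ∀ A : Bundled.{0} L.Structure, Countable A → A ∉ K →
    ∃ (n : ℕ) (φ : L.Formula (Fin n)) (a : Fin n → A),
      φ.IsQF ∧ φ.Realize a ∧ ∀ B ∈ K, ∀ b : Fin n → B, ¬ φ.Realize b

/-- Condition (2) of (H): quantifier elimination. -/
def QElim (K : Set (Bundled.{0} L.Structure)) : Prop :=
  ∀ (m n : ℕ) (φ : L.Formula (Fin m ⊕ Fin n)), φ.IsQF →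
    ∀ A ∈ K, ∀ (a : Fin m → A) (b : Fin n → A), φ.Realize (Sum.elim a b) →
      ∃ ψ : L.Formula (Fin m), ψ.IsQF ∧ ψ.Realize a ∧
        ∀ A' ∈ K, ∀ a' : Fin m → A', ψ.Realize a' →
          ∃ B' ∈ K, ∃ (i : A' ↪[L] B') (b' : Fin n → B'),
            φ.Realize (Sum.elim (fun k => i (a' k)) b')

/-- `D` together with `iA, iB` is a free amalgam of `A` and `B` over `C` in the class `K`. -/
def IsFreeAmalgam (K : Set (Bundled.{0} L.Structure))
    (C A B : Bundled.{0} L.Structure) (cA : C ↪[L] A) (cB : C ↪[L] B)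
    (D : Bundled.{0} L.Structure) (iA : A ↪[L] D) (iB : B ↪[L] D) : Prop :=
  (∀ c : C, iA (cA c) = iB (cB c)) ∧
  (Set.range iA ∩ Set.range iB = Set.range fun c : C => iA (cA c)) ∧
  Substructure.closure L (Set.range iA ∪ Set.range iB) = ⊤ ∧
  ∀ D' ∈ K, ∀ (φA : A →[L] D') (φB : B →[L] D'),
    (∀ c : C, φA (cA c) = φB (cB c)) →
    ∃! φ : D →[L] D',
      (∀ a : A, φ (iA a) = φA a) ∧ (∀ b : B, φ (iB b) = φB b)

/-- Condition (3) of (H): free amalgamation (together with agreement on the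
substructures generated by the constants). -/
def FreeAmalg (K : Set (Bundled.{0} L.Structure)) : Prop :=
  (∀ A ∈ K, ∀ B ∈ K,
      Nonempty ((⊥ : L.Substructure A) ≃[L] (⊥ : L.Substructure B))) ∧
  ∀ (C A B : Bundled.{0} L.Structure), C ∈ K → A ∈ K → B ∈ K →
    ∀ (cA : C ↪[L] A) (cB : C ↪[L] B),
      ∃ D ∈ K, ∃ (iA : A ↪[L] D) (iB : B ↪[L] D),
        IsFreeAmalgam L K C A B cA cB D iA iB

/-- Condition (4) of (H): generic element. -/
def GenericElem (K : Set (Bundled.{0} L.Structure)) : Prop :=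
  ∃ X ∈ K, ∃ x : X, Substructure.closure L ({x} : Set X) = ⊤ ∧
    ∀ A ∈ K, ∀ a : A, ∃ φ : X →[L] A, φ x = a

/-- Condition (5) of (H): algebraically independent 3-amalgamation. -/
def ThreeAmalg (K : Set (Bundled.{0} L.Structure)) : Prop :=
  ∀ (E A B : Bundled.{0} L.Structure) (Bb Dd : Fin 2 → Bundled.{0} L.Structure),
    E ∈ K → A ∈ K → B ∈ K → (∀ i, Bb i ∈ K) → (∀ i, Dd i ∈ K) →
    ∀ (eA : E ↪[L] A) (eB : ∀ i, E ↪[L] Bb i)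
      (aD : ∀ i, A ↪[L] Dd i) (bD : ∀ i, Bb i ↪[L] Dd i)
      (bB : ∀ i, Bb i ↪[L] B),
      (∀ i, ∀ e : E, aD i (eA e) = bD i (eB i e)) →
      (∀ e : E, bB 0 (eB 0 e) = bB 1 (eB 1 e)) →
      (∀ i, Set.range (aD i) ∩ Set.range (bD i) =
        Set.range fun e : E => aD i (eA e)) →
      (Set.range (bB 0) ∩ Set.range (bB 1) =
        Set.range fun e : E => bB 0 (eB 0 e)) →
      ∃ D ∈ K, ∃ (dD : ∀ i, Dd i ↪[L] D) (jB : B ↪[L] D),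
        (∀ i, ∀ b : Bb i, dD i (bD i b) = jB (bB i b)) ∧
        (∀ a : A, dD 0 (aD 0 a) = dD 1 (aD 1 a)) ∧
        (∀ i, Set.range (dD i) ∩ Set.range jB =
          Set.range fun b : Bb i => dD i (bD i b)) ∧
        (Set.range (dD 0) ∩ Set.range (dD 1) =
          Set.range fun a : A => dD 0 (aD 0 a))

/-- The hypotheses (H) on the class `K`. -/
structure HypH (K : Set (Bundled.{0} L.Structure)) : Prop where
  small : SmallMembers L K
  isoClosed : IsoClosed L K
  univAx : UnivAx L K
  qElim : QElim L K
  freeAmalg : FreeAmalg L K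
  generic : GenericElem L K
  threeAmalg : ThreeAmalg L K

/-- `M` is `K`-ℵ₁-saturated. -/
def KSat (K : Set (Bundled.{0} L.Structure)) (M : Type) [L.Structure M] : Prop :=
  (∀ S : L.Substructure M, Cardinal.mk S < Cardinal.aleph 1 → (Bundled.of (↥S) : Bundled L.Structure) ∈ K) ∧
  ∀ U ∈ K, ∀ B ∈ K, ∀ (f₀ : U ↪[L] M) (f₁ : U ↪[L] B),
    ∃ g : B ↪[L] M, ∀ u : U, g (f₁ u) = f₀ u

/-- Γ-independence of countable substructures of `M`. -/
def GammaIndep (M : Type) [L.Structure M] (E A B : L.Substructure M) : Prop :=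
  ∀ D' : L.Substructure M, Countable D' →
    ∀ (φA : A →[L] D') (φB : B →[L] D'),
      (∀ (x : M) (hA : x ∈ A) (hB : x ∈ B), x ∈ E → φA ⟨x, hA⟩ = φB ⟨x, hB⟩) →
      ∃! φ : ↥(A ⊔ B) →[L] D',
        (∀ (x : M) (h : x ∈ A), φ ⟨x, (le_sup_left : A ≤ A ⊔ B) h⟩ = φA ⟨x, h⟩) ∧
        (∀ (x : M) (h : x ∈ B), φ ⟨x, (le_sup_right : B ≤ A ⊔ B) h⟩ = φB ⟨x, h⟩)

/-- M-independence: forcing base monotonicity on algebraic independence. -/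
def MIndep (M : Type) [L.Structure M] (E A B : L.Substructure M) : Prop :=
  ∀ C : L.Substructure M, E ≤ C → C ≤ B → (A ⊔ C) ⊓ B = C



section Aux

open FirstOrder.Language.Substructure

variable {L : FirstOrder.Language.{0, 0}} {M : Type} {N : Type}
  [L.Structure M] [L.Structure N]

lemma countable_closure_aux (hL : Countable L.Symbols) {s : Set M} (hs : s.Countable) :
    Countable (Substructure.closure L s) := by
  rw [← Cardinal.mk_le_aleph0_iff]
  have h := Substructure.lift_card_closure_le (L := L) (s := s)
  simp only [Cardinal.lift_id] at h
  refine h.trans (max_le le_rfl ?_)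
  haveI : Countable s := hs.to_subtype
  haveI : Countable (Σ i, L.Functions i) := Language.Countable.countable_functions
  calc (Cardinal.mk s) + Cardinal.mk (Σ i, L.Functions i)
      ≤ ℵ₀ + ℵ₀ := add_le_add Cardinal.mk_le_aleph0 Cardinal.mk_le_aleph0
    _ = ℵ₀ := Cardinal.aleph0_add_aleph0

lemma sub_countable_set {S : L.Substructure M} (h : Countable S) : (S : Set M).Countable :=
  Set.countable_coe_iff.1 h

lemma mk_sub_lt_aleph_one {S : L.Substructure M} (h : Countable S) :
    Cardinal.mk S < Cardinal.aleph 1 :=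
  lt_of_le_of_lt Cardinal.mk_le_aleph0 Cardinal.aleph0_lt_aleph_one

/-- Transport an `L`-equivalence along an equality of substructures. -/
def substructureEquivOfEq {S T : L.Substructure M} (h : S = T) : S ≃[L] T := by
  subst h; exact Language.Equiv.refl L S

lemma partialEquiv_cod_countable (f : M ≃ₚ[L] N) (h : Countable f.dom) :
    Countable f.cod :=
  Countable.of_equiv _ f.toEquiv.toEquiv

lemma step_right (hL : Countable L.Symbols) (K : Set (Bundled.{0} L.Structure))
    (hM : KSat L K M) (hN : KSat L K N) (f : M ≃ₚ[L] N) (hdom : Countable f.dom)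
    (m : M) : ∃ g : M ≃ₚ[L] N, f ≤ g ∧ Countable g.dom ∧ m ∈ g.dom := by
  set A : L.Substructure M := f.dom ⊔ Substructure.closure L {m} with hA
  have hAc : Countable A := by
    have hAeq : A = Substructure.closure L ((f.dom : Set M) ∪ {m}) := by
      rw [Substructure.closure_union, Substructure.closure_eq]
    rw [hAeq]
    exact countable_closure_aux hL ((sub_countable_set hdom).union (Set.countable_singleton m))
  have hfK : (Bundled.of (↥f.dom) : Bundled L.Structure) ∈ K :=
    hM.1 f.dom (mk_sub_lt_aleph_one hdom)
  have hAK : (Bundled.of (↥A) : Bundled L.Structure) ∈ K :=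
    hM.1 A (mk_sub_lt_aleph_one hAc)
  obtain ⟨g, hg⟩ := hN.2 (Bundled.of (↥f.dom)) hfK (Bundled.of (↥A)) hAK
    f.toEmbedding (Substructure.inclusion le_sup_left)
  refine ⟨⟨A, g.toHom.range, g.equivRange⟩, ?_, hAc, ?_⟩
  · rw [Language.PartialEquiv.le_iff]
    have hcod : f.cod ≤ g.toHom.range := by
      intro y hy
      have h1 : y = f.toEmbedding (f.toEquiv.symm ⟨y, hy⟩) := by
        rw [Language.PartialEquiv.toEmbedding_apply]
        simp
      rw [h1]
      exact Language.Hom.mem_range.2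
        ⟨Substructure.inclusion le_sup_left (f.toEquiv.symm ⟨y, hy⟩), hg _⟩
    refine ⟨le_sup_left, hcod, fun x => Subtype.ext ?_⟩
    show (f.toEquiv x : N) = (g.equivRange (Substructure.inclusion le_sup_left x) : N)
    show (f.toEquiv x : N) = g (Substructure.inclusion le_sup_left x)
    exact (hg x).symm
  · exact (le_sup_right : Substructure.closure L {m} ≤ A)
      (Substructure.subset_closure rfl)

lemma step_both (hL : Countable L.Symbols) (K : Set (Bundled.{0} L.Structure))
    (hM : KSat L K M) (hN : KSat L K N) (f : M ≃ₚ[L] N) (hdom : Countable f.dom)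
    (m : M) (n : N) :
    ∃ g : M ≃ₚ[L] N, f ≤ g ∧ Countable g.dom ∧ m ∈ g.dom ∧ n ∈ g.cod := by
  obtain ⟨p, hfp, hpc, hm⟩ := step_right hL K hM hN f hdom m
  obtain ⟨q, hpq, hqc, hn⟩ := step_right hL K hN hM p.symm
    (partialEquiv_cod_countable p hpc) n
  have hpq' : p ≤ q.symm := Language.PartialEquiv.symm_le_iff.1 hpq
  refine ⟨q.symm, le_trans hfp hpq', ?_, ?_, ?_⟩
  · exact partialEquiv_cod_countable q hqc
  · exact Language.PartialEquiv.dom_le_dom hpq' hm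
  · exact hn

lemma bot_sub_eq_top {S : L.Substructure M} (hS : S = ⊥) :
    (⊥ : L.Substructure S) = ⊤ := by
  rw [eq_top_iff]
  rintro ⟨x, hx⟩ -
  have hle : S ≤ Substructure.map S.subtype.toHom (⊥ : L.Substructure S) := hS ▸ bot_le
  obtain ⟨y, hy, hxy⟩ := Substructure.mem_map.1 (hle hx)
  have : y = (⟨x, hx⟩ : S) := Subtype.ext hxy
  exact this ▸ hy

lemma base_exists (hL : Countable L.Symbols) (K : Set (Bundled.{0} L.Structure))
    (hbot : ∀ A ∈ K, ∀ B ∈ K,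
      Nonempty ((⊥ : L.Substructure A) ≃[L] (⊥ : L.Substructure B)))
    (hM : KSat L K M) (hN : KSat L K N) :
    ∃ f : M ≃ₚ[L] N, Countable f.dom := by
  have hcM : Countable (⊥ : L.Substructure M) := by
    have := countable_closure_aux (M := M) hL Set.countable_empty
    rwa [Substructure.closure_empty] at this
  have hcN : Countable (⊥ : L.Substructure N) := by
    have := countable_closure_aux (M := N) hL Set.countable_empty
    rwa [Substructure.closure_empty] at this
  obtain ⟨e⟩ := hbot (Bundled.of (↥(⊥ : L.Substructure M)))
    (hM.1 _ (mk_sub_lt_aleph_one hcM))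
    (Bundled.of (↥(⊥ : L.Substructure N)))
    (hN.1 _ (mk_sub_lt_aleph_one hcN))
  let a : (⊥ : L.Substructure (⊥ : L.Substructure M)) ≃[L] (⊥ : L.Substructure M) :=
    Substructure.topEquiv.comp (substructureEquivOfEq (bot_sub_eq_top rfl))
  let b : (⊥ : L.Substructure (⊥ : L.Substructure N)) ≃[L] (⊥ : L.Substructure N) :=
    Substructure.topEquiv.comp (substructureEquivOfEq (bot_sub_eq_top rfl))
  exact ⟨⟨⊥, ⊥, b.comp (e.comp a.symm)⟩, hcM⟩

end Aux

lemma back_and_forth {L : FirstOrder.Language.{0, 0}} {M N : Type}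
    [L.Structure M] [L.Structure N] (hL : Countable L.Symbols)
    (K : Set (Bundled.{0} L.Structure)) (hM : KSat L K M) (hN : KSat L K N)
    {ι : Type} [LinearOrder ι] [IsWellOrder ι (· < ·)] [Nonempty ι]
    (hsmall : ∀ i : ι, Countable {j : ι // j < i})
    (f0 : M ≃ₚ[L] N) (hf0 : Countable f0.dom)
    (eM : ι ≃ M) (eN : ι ≃ N) : Nonempty (M ≃[L] N) := by
  classical
  let F : ∀ i : ι, (∀ j : ι, j < i → (M ≃ₚ[L] N)) → (M ≃ₚ[L] N) := fun i prior =>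
    if h : ∃ p : M ≃ₚ[L] N, Countable p.dom ∧ ∀ (j : ι) (hj : j < i), prior j hj ≤ p then
      Classical.choose (step_both hL K hM hN (Classical.choose h)
        (Classical.choose_spec h).1 (eM i) (eN i))
    else f0
  let S : ι → (M ≃ₚ[L] N) := WellFounded.fix wellFounded_lt F
  have hSeq : ∀ i, S i = F i (fun j _ => S j) := fun i => WellFounded.fix_eq wellFounded_lt F i
  have key : ∀ i : ι, (Countable (S i).dom ∧ eM i ∈ (S i).dom ∧ eN i ∈ (S i).cod) ∧
      ∀ j, j < i → S j ≤ S i := by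
    intro i
    induction i using WellFoundedLT.induction with
    | ind i IH =>
    have hcond : ∃ p : M ≃ₚ[L] N, Countable p.dom ∧
        ∀ (j : ι) (hj : j < i), (fun (j : ι) (_ : j < i) => S j) j hj ≤ p := by
      by_cases hne : ∃ j : ι, j < i
      · haveI hne' : Nonempty {j : ι // j < i} := ⟨⟨hne.choose, hne.choose_spec⟩⟩
        haveI hcnt : Countable {j : ι // j < i} := hsmall i
        let T : {j : ι // j < i} →o (M ≃ₚ[L] N) :=
          ⟨fun j => S j.1, by
            intro j j' hle
            rcases eq_or_lt_of_le (show (j : ι) ≤ (j' : ι) from hle) with heq | hlt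
            · show S j.1 ≤ S j'.1
              rw [heq]
            · exact (IH j'.1 j'.2).2 j.1 hlt⟩
        refine ⟨Language.DirectLimit.partialEquivLimit T, ?_, fun j hj =>
          Language.DirectLimit.le_partialEquivLimit T ⟨j, hj⟩⟩
        have hsup : (Language.DirectLimit.partialEquivLimit T).dom ≤
            Substructure.closure L (⋃ j : {j : ι // j < i}, ((S j.1).dom : Set M)) := by
          rw [Language.DirectLimit.dom_partialEquivLimit]
          refine iSup_le fun j => ?_
          show (S j.1).dom ≤ _
          nth_rewrite 1 [← Substructure.closure_eq (L := L) (S j.1).dom]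
          exact Substructure.closure_mono
            (Set.subset_iUnion (fun j : {j : ι // j < i} => ((S j.1).dom : Set M)) j)
        have hCc : ((Substructure.closure L
            (⋃ j : {j : ι // j < i}, ((S j.1).dom : Set M))) : Set M).Countable :=
          sub_countable_set (countable_closure_aux hL
            (Set.countable_iUnion fun j => sub_countable_set (IH j.1 j.2).1.1))
        exact Set.Countable.to_subtype (hCc.mono (SetLike.coe_subset_coe.2 hsup))
      · exact ⟨f0, hf0, fun j hj => absurd ⟨j, hj⟩ hne⟩
    have heq : S i = Classical.choose (step_both hL K hM hN (Classical.choose hcond)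
        (Classical.choose_spec hcond).1 (eM i) (eN i)) := by
      rw [hSeq i]
      exact dif_pos hcond
    obtain ⟨hfp, hcnt, hm, hn⟩ := Classical.choose_spec (step_both hL K hM hN
      (Classical.choose hcond) (Classical.choose_spec hcond).1 (eM i) (eN i))
    rw [← heq] at hfp hcnt hm hn
    exact ⟨⟨hcnt, hm, hn⟩, fun j hj =>
      le_trans ((Classical.choose_spec hcond).2 j hj) hfp⟩
  let Sfull : ι →o (M ≃ₚ[L] N) :=
    ⟨S, fun j i hle => by
      rcases eq_or_lt_of_le hle with heq | h
      · rw [heq]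
      · exact (key i).2 j h⟩
  have hdom : (Language.DirectLimit.partialEquivLimit Sfull).dom = ⊤ := by
    rw [Language.DirectLimit.dom_partialEquivLimit, eq_top_iff]
    intro m _
    exact le_iSup (fun i => (Sfull i).dom) (eM.symm m)
      (by have h := (key (eM.symm m)).1.2.1; rw [Equiv.apply_symm_apply] at h; exact h)
  have hcod : (Language.DirectLimit.partialEquivLimit Sfull).cod = ⊤ := by
    rw [Language.DirectLimit.cod_partialEquivLimit, eq_top_iff]
    intro n _
    exact le_iSup (fun i => (Sfull i).cod) (eN.symm n)
      (by have h := (key (eN.symm n)).1.2.2; rw [Equiv.apply_symm_apply] at h; exact h)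
  exact ⟨Language.PartialEquiv.toEquivOfEqTop hdom hcod⟩

/-- Assuming CH and (H), any two `K`-ℵ₁-saturated `L`-structures of
cardinality ℵ₁ are isomorphic. -/
theorem statement_2 (L : FirstOrder.Language.{0, 0}) (hL : Countable L.Symbols)
    (K : Set (Bundled.{0} L.Structure))
    (hCH : (2 : Cardinal.{0}) ^ (aleph0 : Cardinal.{0}) = aleph 1)
    (hK : HypH L K)
    (M : Type) [L.Structure M] (hM : KSat L K M) (hMcard : Cardinal.mk M = aleph 1)
    (N : Type) [L.Structure N] (hN : KSat L K N) (hNcard : Cardinal.mk N = aleph 1) :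
    Nonempty (M ≃[L] N) := by
  classical
  obtain ⟨f0, hf0⟩ := base_exists hL K hK.freeAmalg.1 hM hN
  have haleph1 : (Cardinal.aleph 1) ≠ 0 :=
    ne_of_gt (lt_trans Cardinal.aleph0_pos Cardinal.aleph0_lt_aleph_one)
  haveI : IsWellOrder ((Cardinal.aleph 1 : Cardinal.{0})).ord.ToType (· < ·) := isWellOrder_lt
  haveI : Nonempty ((Cardinal.aleph 1 : Cardinal.{0})).ord.ToType :=
    Ordinal.toType_nonempty_iff_ne_zero.2 (by
      intro h0
      apply haleph1
      rw [← Cardinal.card_ord (Cardinal.aleph 1), h0, Ordinal.card_zero])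
  obtain ⟨eM⟩ : Nonempty (((Cardinal.aleph 1 : Cardinal.{0})).ord.ToType ≃ M) :=
    Cardinal.eq.1 (by rw [Cardinal.mk_toType, Cardinal.card_ord, hMcard])
  obtain ⟨eN⟩ : Nonempty (((Cardinal.aleph 1 : Cardinal.{0})).ord.ToType ≃ N) :=
    Cardinal.eq.1 (by rw [Cardinal.mk_toType, Cardinal.card_ord, hNcard])
  have hsmall : ∀ i : ((Cardinal.aleph 1 : Cardinal.{0})).ord.ToType,
      Countable {j : ((Cardinal.aleph 1 : Cardinal.{0})).ord.ToType // j < i} := by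
    intro i
    rw [← Cardinal.mk_le_aleph0_iff]
    have h2 : Ordinal.typein ((· < ·) : ((Cardinal.aleph 1 : Cardinal.{0})).ord.ToType →
        ((Cardinal.aleph 1 : Cardinal.{0})).ord.ToType → Prop) i < (Cardinal.aleph 1).ord := by
      have h2' := Ordinal.typein_lt_type
        ((· < ·) : ((Cardinal.aleph 1 : Cardinal.{0})).ord.ToType → ((Cardinal.aleph 1 : Cardinal.{0})).ord.ToType → Prop) i
      rwa [Ordinal.type_toType] at h2'
    have h4 : (Ordinal.typein ((· < ·) : ((Cardinal.aleph 1 : Cardinal.{0})).ord.ToType →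
        ((Cardinal.aleph 1 : Cardinal.{0})).ord.ToType → Prop) i).card < Order.succ ℵ₀ := by
      rw [Cardinal.succ_aleph0]
      exact Cardinal.lt_ord.1 h2
    rw [← Ordinal.card_typein]
    exact Order.lt_succ_iff.1 h4
  exact back_and_forth hL K hM hN hsmall f0 hf0 eM eN

end FraisseFreeAmalg
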